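/- Let R be a G-crossed product (i.e. a G-graded unital ring such that each component R_g contains a unit of R). Then R is G-controlled if and only if R_e is a simple ring and for every invertible u_g ∈ R_g with g ≠ e, the automorphism a ↦ u_g a u_g⁻¹ of R_e is outer (not inner). -/

import Mathlib

open DirectSum Pointwise

namespace Controlled

variable {G R : Type*} [AddGroup G] [DecidableEq G] [Ring R]

/-- `P` is an `R_e`-sub-bimodule of `R` (w.r.t. the grading `𝒜`, written additively,
so `R_e = 𝒜 0`). -/
def IsSubBimodule (𝒜 : G → AddSubgroup R) (P : AddSubgroup R) : Prop :=
  ∀ a ∈ 𝒜 0, ∀ x ∈ P, a * x ∈ P ∧ x * a ∈ P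

/-- The `R_e`-bimodule `R_H = ⊕_{h ∈ H} R_h` (internally, the subgroup generated by
the `R_h`, `h ∈ H`; the sum is automatically direct). `R_∅ = ⊥ = {0}`. -/
def RH (𝒜 : G → AddSubgroup R) (H : Set G) : AddSubgroup R := ⨆ h ∈ H, 𝒜 h

/-- An `R_e`-bimodule isomorphism between additive subgroups `P` and `Q` of `R`:
an additive equivalence compatible with left and right multiplication by `R_e = 𝒜 0`. -/
structure BimodIso (𝒜 : G → AddSubgroup R) (P Q : AddSubgroup R) where
  toEquiv : P ≃+ Q
  map_left : ∀ (a x : R), a ∈ 𝒜 0 → ∀ (hx : x ∈ P) (hax : a * x ∈ P),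
    (toEquiv ⟨a * x, hax⟩ : R) = a * (toEquiv ⟨x, hx⟩ : R)
  map_right : ∀ (a x : R), a ∈ 𝒜 0 → ∀ (hx : x ∈ P) (hxa : x * a ∈ P),
    (toEquiv ⟨x * a, hxa⟩ : R) = (toEquiv ⟨x, hx⟩ : R) * a

/-- `R` is `G`-controlled: `H ↦ R_H` is a bijection from subsets of `G` onto the
`R_e`-sub-bimodules of `R`, and `R_S ≅ R_T` (as `R_e`-bimodules) iff `S = T`. -/
def IsControlled (𝒜 : G → AddSubgroup R) : Prop :=
  (∀ H : Set G, IsSubBimodule 𝒜 (RH 𝒜 H)) ∧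
  Function.Injective (RH 𝒜) ∧
  (∀ P : AddSubgroup R, IsSubBimodule 𝒜 P → ∃ H : Set G, RH 𝒜 H = P) ∧
  (∀ S T : Set G, Nonempty (BimodIso 𝒜 (RH 𝒜 S) (RH 𝒜 T)) ↔ S = T)

/-- `P` is a (nonzero) simple `R_e`-bimodule contained in `R`. -/
def IsSimpleBimod (𝒜 : G → AddSubgroup R) (P : AddSubgroup R) : Prop :=
  P ≠ ⊥ ∧ ∀ Q : AddSubgroup R, Q ≤ P → IsSubBimodule 𝒜 Q → Q = ⊥ ∨ Q = P

/-- The product `AB` of two additive subgroups of `R`: all finite sums of products. -/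
def mulSub (A B : AddSubgroup R) : AddSubgroup R :=
  AddSubgroup.closure ((A : Set R) * (B : Set R))

/-- `R` is strongly graded: `R_g R_h = R_{g+h}` for all `g, h`. -/
def IsStronglyGraded (𝒜 : G → AddSubgroup R) : Prop :=
  ∀ g h : G, mulSub (𝒜 g) (𝒜 h) = 𝒜 (g + h)

/-- `C_R(R_e) = Z(R_e)` as subsets of `R`. -/
def CentralizerEqCenter (𝒜 : G → AddSubgroup R) : Prop :=
  {x : R | ∀ r ∈ 𝒜 0, x * r = r * x} = {x : R | x ∈ 𝒜 0 ∧ ∀ r ∈ 𝒜 0, x * r = r * x}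

/-- A two-sided ideal `I` is graded if each homogeneous component of each of its
elements again lies in `I` (equivalently, `I = ⊕_g (I ∩ R_g)`). -/
def IsGradedIdeal (𝒜 : G → AddSubgroup R) [GradedRing 𝒜] (I : TwoSidedIdeal R) : Prop :=
  ∀ x ∈ I, ∀ g : G, (DirectSum.decompose 𝒜 x g : R) ∈ I

/-- `R` is graded simple: the only graded two-sided ideals are `{0}` and `R`. -/
def IsGradedSimple (𝒜 : G → AddSubgroup R) [GradedRing 𝒜] : Prop :=
  ∀ I : TwoSidedIdeal R, IsGradedIdeal 𝒜 I → I = ⊥ ∨ I = ⊤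

end Controlled

variable {G R : Type*} [AddGroup G] [DecidableEq G] [Ring R]


set_option linter.unusedSectionVars false

section Aux
variable (𝒜 : G → AddSubgroup R) [GradedRing 𝒜]
open DirectSum

lemma decompose_mul_left' {g : G} {a : R} (ha : a ∈ 𝒜 g) (x : R) (h : G) :
    (decompose 𝒜 (a * x) (g + h) : R) = a * (decompose 𝒜 x h : R) := by
  induction x using DirectSum.Decomposition.inductionOn 𝒜 with
  | zero => simp
  | @homogeneous i m =>
    rcases eq_or_ne i h with rfl | hne
    · rw [DirectSum.decompose_of_mem_same 𝒜 (SetLike.mul_mem_graded ha m.2),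
        DirectSum.decompose_of_mem_same 𝒜 m.2]
    · rw [DirectSum.decompose_of_mem_ne 𝒜 (SetLike.mul_mem_graded ha m.2)
        (by simpa using hne),
        DirectSum.decompose_of_mem_ne 𝒜 m.2 hne, mul_zero]
  | add m m' hm hm' =>
    rw [mul_add, DirectSum.decompose_add, DirectSum.add_apply, AddSubgroup.coe_add,
      hm, hm', DirectSum.decompose_add, DirectSum.add_apply, AddSubgroup.coe_add,
      mul_add]

lemma decompose_mul_right' {g : G} {a : R} (ha : a ∈ 𝒜 g) (x : R) (h : G) :
    (decompose 𝒜 (x * a) (h + g) : R) = (decompose 𝒜 x h : R) * a := by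
  induction x using DirectSum.Decomposition.inductionOn 𝒜 with
  | zero => simp
  | @homogeneous i m =>
    rcases eq_or_ne i h with rfl | hne
    · rw [DirectSum.decompose_of_mem_same 𝒜 (SetLike.mul_mem_graded m.2 ha),
        DirectSum.decompose_of_mem_same 𝒜 m.2]
    · rw [DirectSum.decompose_of_mem_ne 𝒜 (SetLike.mul_mem_graded m.2 ha)
        (by simpa using hne),
        DirectSum.decompose_of_mem_ne 𝒜 m.2 hne, zero_mul]
  | add m m' hm hm' =>
    rw [add_mul, DirectSum.decompose_add, DirectSum.add_apply, AddSubgroup.coe_add,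
      hm, hm', DirectSum.decompose_add, DirectSum.add_apply, AddSubgroup.coe_add,
      add_mul]

lemma decompose_zero_mul {a : R} (ha : a ∈ 𝒜 0) (x : R) (g : G) :
    (decompose 𝒜 (a * x) g : R) = a * (decompose 𝒜 x g : R) := by
  have := decompose_mul_left' 𝒜 ha x g; rwa [zero_add] at this

lemma decompose_mul_zero {a : R} (ha : a ∈ 𝒜 0) (x : R) (g : G) :
    (decompose 𝒜 (x * a) g : R) = (decompose 𝒜 x g : R) * a := by
  have := decompose_mul_right' 𝒜 ha x g; rwa [add_zero] at this

lemma inv_mem_neg (u : Rˣ) {g : G} (hu : (u : R) ∈ 𝒜 g) : ((u⁻¹ : Rˣ) : R) ∈ 𝒜 (-g) := by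
  classical
  have hvan : ∀ h : G, h ≠ -g → (decompose 𝒜 ((u⁻¹ : Rˣ) : R) h : R) = 0 := by
    intro h hh
    have h1 : (decompose 𝒜 ((u : R) * ((u⁻¹ : Rˣ) : R)) (g + h) : R)
        = (u : R) * (decompose 𝒜 ((u⁻¹ : Rˣ) : R) h : R) := decompose_mul_left' 𝒜 hu _ h
    rw [u.mul_inv] at h1
    have h2 : (decompose 𝒜 (1 : R) (g + h) : R) = 0 :=
      DirectSum.decompose_of_mem_ne 𝒜 (SetLike.one_mem_graded 𝒜)
        (fun hc => hh (eq_neg_of_add_eq_zero_right hc.symm))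
    have := h2.symm.trans h1
    calc ((decompose 𝒜 ((u⁻¹ : Rˣ) : R) h : R))
        = (u⁻¹ : Rˣ) * ((u : R) * (decompose 𝒜 ((u⁻¹ : Rˣ) : R) h : R)) := by
          rw [← mul_assoc, u.inv_mul, one_mul]
      _ = 0 := by rw [← this, mul_zero]
  have hrep := DirectSum.sum_support_decompose 𝒜 ((u⁻¹ : Rˣ) : R)
  rw [← hrep]
  refine AddSubgroup.sum_mem _ ?_
  intro k hk
  have : k = -g := by
    by_contra hkk
    exact (DFinsupp.mem_support_iff.mp hk) (Subtype.ext (hvan k hkk))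
  subst this
  exact ((decompose 𝒜 ((u⁻¹ : Rˣ) : R)) (-g)).2
open DirectSum Controlled

lemma grade_le_RH {H : Set G} {g : G} (hg : g ∈ H) : 𝒜 g ≤ RH 𝒜 H :=
  le_iSup₂ (f := fun h _ => 𝒜 h) g hg

lemma RH_le {H : Set G} {P : AddSubgroup R} (h : ∀ g ∈ H, 𝒜 g ≤ P) : RH 𝒜 H ≤ P :=
  iSup₂_le h

lemma mem_RH_iff {H : Set G} {x : R} :
    x ∈ RH 𝒜 H ↔ ∀ g, g ∉ H → (decompose 𝒜 x g : R) = 0 := by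
  classical
  constructor
  · intro hx
    let K : AddSubgroup R :=
      { carrier := {x | ∀ g, g ∉ H → (decompose 𝒜 x g : R) = 0}
        zero_mem' := by intro g _; simp
        add_mem' := by
          intro a b ha hb g hg
          rw [DirectSum.decompose_add, DirectSum.add_apply, AddSubgroup.coe_add,
            ha g hg, hb g hg, add_zero]
        neg_mem' := by
          intro a ha g hg
          rw [DirectSum.decompose_neg, DFinsupp.neg_apply, AddSubgroup.coe_neg,
            ha g hg, neg_zero] }
    have : RH 𝒜 H ≤ K := by
      refine RH_le 𝒜 ?_
      intro h hh y hy g hg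
      exact DirectSum.decompose_of_mem_ne 𝒜 hy (fun hc => hg (hc ▸ hh))
    exact this hx
  · intro hvan
    have hrep := DirectSum.sum_support_decompose 𝒜 x
    rw [← hrep]
    refine AddSubgroup.sum_mem _ ?_
    intro k hk
    have hkH : k ∈ H := by
      by_contra hkk
      exact (DFinsupp.mem_support_iff.mp hk) (Subtype.ext (hvan k hkk))
    exact grade_le_RH 𝒜 hkH ((decompose 𝒜 x) k).2

lemma RH_singleton (g : G) : RH 𝒜 ({g} : Set G) = 𝒜 g := by
  refine le_antisymm (RH_le 𝒜 ?_) (grade_le_RH 𝒜 rfl)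
  rintro h rfl; exact le_rfl

lemma RH_empty : RH 𝒜 (∅ : Set G) = ⊥ := by
  simp [RH]

lemma isSubBimodule_RH (H : Set G) : IsSubBimodule 𝒜 (RH 𝒜 H) := by
  intro a ha x hx
  rw [mem_RH_iff 𝒜] at hx
  constructor
  · rw [mem_RH_iff 𝒜]
    intro g hg
    rw [decompose_zero_mul 𝒜 ha, hx g hg, mul_zero]
  · rw [mem_RH_iff 𝒜]
    intro g hg
    rw [decompose_mul_zero 𝒜 ha, hx g hg, zero_mul]

lemma conj_mem_zero (t : Rˣ) {h : G} (ht : (t : R) ∈ 𝒜 h) {a : R} (ha : a ∈ 𝒜 0) :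
    (t : R) * a * ((t⁻¹ : Rˣ) : R) ∈ 𝒜 0 := by
  have := SetLike.mul_mem_graded (SetLike.mul_mem_graded ht ha) (inv_mem_neg 𝒜 t ht)
  rwa [add_zero, add_neg_cancel] at this

lemma unit_ne_zero (h1 : (1 : R) ≠ 0) (u : Rˣ) : (u : R) ≠ 0 := by
  intro h
  exact h1 (by rw [← u.mul_inv, h, zero_mul])

lemma one_ne_zero_of_simple (hs : IsSimpleRing ↥(𝒜 0)) : (1 : R) ≠ 0 := by
  intro h
  have h2 : (1 : ↥(𝒜 0)) = 0 := Subtype.ext h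
  have := hs.simple.exists_pair_ne
  obtain ⟨I, J, hIJ⟩ := this
  apply hIJ
  have : ∀ K : TwoSidedIdeal ↥(𝒜 0), ∀ x : ↥(𝒜 0), x ∈ K := by
    intro K x
    have : x = 0 := by
      calc x = x * 1 := (mul_one x).symm
        _ = 0 := by rw [h2, mul_zero]
    rw [this]; exact K.zero_mem
  exact SetLike.ext fun x => by simp [this I x, this J x]

lemma RH_injective (h1 : (1 : R) ≠ 0) (hcp : ∀ g : G, ∃ u : Rˣ, (u : R) ∈ 𝒜 g) :
    Function.Injective (RH 𝒜) := by
  have key : ∀ S T : Set G, RH 𝒜 S = RH 𝒜 T → S ⊆ T := by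
    intro S T h g hg
    obtain ⟨u, hu⟩ := hcp g
    have hmem : (u : R) ∈ RH 𝒜 T := h ▸ grade_le_RH 𝒜 hg hu
    by_contra hgT
    have := (mem_RH_iff 𝒜).mp hmem g hgT
    rw [DirectSum.decompose_of_mem_same 𝒜 hu] at this
    exact unit_ne_zero h1 u this
  intro S T h
  exact le_antisymm (key S T h) (key T S h.symm)

lemma exists_inner (hs : IsSimpleRing ↥(𝒜 0)) (t : Rˣ) {h : G} (ht : (t : R) ∈ 𝒜 h)
    {q : R} (hq : q ∈ 𝒜 0) (hq0 : q ≠ 0)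
    (hrel : ∀ b ∈ 𝒜 0, ((t : R) * b * ((t⁻¹ : Rˣ) : R)) * q = q * b) :
    ∃ v w : R, v ∈ 𝒜 0 ∧ w ∈ 𝒜 0 ∧ v * w = 1 ∧ w * v = 1 ∧
      ∀ a ∈ 𝒜 0, (t : R) * a * ((t⁻¹ : Rˣ) : R) = v * a * w := by
  classical
  set A := ↥(𝒜 0)
  set qA : A := ⟨q, hq⟩ with hqA
  have hqA0 : qA ≠ 0 := fun hc => hq0 (congrArg Subtype.val hc)
  -- relation at A-level: for b : A, (τ b) * qA = qA * b  where τ b := ⟨t b t⁻¹, _⟩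
  have hrelA : ∀ b : A, (⟨(t : R) * (b : R) * ((t⁻¹ : Rˣ) : R), conj_mem_zero 𝒜 t ht b.2⟩ : A) * qA
      = qA * b := fun b => Subtype.ext (hrel (b : R) b.2)
  -- reverse relation: b * qA = qA * ⟨t⁻¹ b t, _⟩
  have hmem' : ∀ b : A, ((t⁻¹ : Rˣ) : R) * (b : R) * (t : R) ∈ 𝒜 0 := by
    intro b
    have := SetLike.mul_mem_graded (SetLike.mul_mem_graded (inv_mem_neg 𝒜 t ht) b.2) ht
    rwa [add_zero, neg_add_cancel] at this
  have hrelA' : ∀ b : A, b * qA = qA * (⟨((t⁻¹ : Rˣ) : R) * (b : R) * (t : R), hmem' b⟩ : A) := by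
    intro b
    have := hrel (((t⁻¹ : Rˣ) : R) * (b : R) * (t : R)) (hmem' b)
    have e : (t : R) * (((t⁻¹ : Rˣ) : R) * (b : R) * (t : R)) * ((t⁻¹ : Rˣ) : R) = (b : R) := by
      rw [mul_assoc, t.mul_inv_cancel_right, ← mul_assoc, t.mul_inv, one_mul]
    rw [e] at this
    exact Subtype.ext this
  -- Image ideal
  let Im : TwoSidedIdeal A := TwoSidedIdeal.mk' {m : A | ∃ x : A, x * qA = m}
    ⟨0, by rw [zero_mul]⟩
    (fun ⟨x, hx⟩ ⟨y, hy⟩ => ⟨x + y, by rw [add_mul, hx, hy]⟩)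
    (fun ⟨x, hx⟩ => ⟨-x, by rw [neg_mul, hx]⟩)
    (fun {c m} ⟨x, hx⟩ => ⟨c * x, by rw [mul_assoc, hx]⟩)
    (fun {m b} ⟨x, hx⟩ => ⟨x * ⟨(t : R) * (b : R) * ((t⁻¹ : Rˣ) : R), conj_mem_zero 𝒜 t ht b.2⟩,
      by rw [mul_assoc, hrelA b, ← mul_assoc, hx]⟩)
  have hImTop : Im = ⊤ := by
    rcases hs.simple.eq_bot_or_eq_top Im with hbot | htop
    · exfalso
      have : qA ∈ Im := (TwoSidedIdeal.mem_mk' _ _ _ _ _ _ qA).mpr ⟨1, one_mul qA⟩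
      rw [hbot, TwoSidedIdeal.mem_bot] at this
      exact hqA0 this
    · exact htop
  obtain ⟨s, hsq⟩ : ∃ s : A, s * qA = 1 := by
    have : (1 : A) ∈ Im := hImTop ▸ trivial
    exact (TwoSidedIdeal.mem_mk' _ _ _ _ _ _ (1 : A)).mp this
  -- Kernel ideal
  let Ker : TwoSidedIdeal A := TwoSidedIdeal.mk' {x : A | x * qA = 0}
    (zero_mul qA)
    (fun hx hy => by simp only [Set.mem_setOf_eq] at *; rw [add_mul, hx, hy, add_zero])
    (fun hx => by simp only [Set.mem_setOf_eq] at *; rw [neg_mul, hx, neg_zero])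
    (fun {c x} hx => by simp only [Set.mem_setOf_eq] at *; rw [mul_assoc, hx, mul_zero])
    (fun {x b} hx => by
      simp only [Set.mem_setOf_eq] at *
      rw [mul_assoc, hrelA' b, ← mul_assoc, hx, zero_mul])
  have hKerBot : Ker = ⊥ := by
    rcases hs.simple.eq_bot_or_eq_top Ker with hbot | htop
    · exact hbot
    · exfalso
      have : (1 : A) ∈ Ker := htop ▸ trivial
      have h1 : (1 : A) * qA = 0 := (TwoSidedIdeal.mem_mk' _ _ _ _ _ _ (1 : A)).mp this
      rw [one_mul] at h1
      exact hqA0 h1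
  have hqs : qA * s = 1 := by
    have hmemK : qA * s - 1 ∈ Ker := by
      refine (TwoSidedIdeal.mem_mk' _ _ _ _ _ _ _).mpr ?_
      show (qA * s - 1) * qA = 0
      rw [sub_mul, one_mul, mul_assoc, hsq, mul_one, sub_self]
    rw [hKerBot, TwoSidedIdeal.mem_bot] at hmemK
    exact sub_eq_zero.mp hmemK
  refine ⟨q, (s : R), hq, s.2, ?_, ?_, ?_⟩
  · exact congrArg Subtype.val hqs
  · exact congrArg Subtype.val hsq
  · intro a ha
    have h1 : ((t : R) * a * ((t⁻¹ : Rˣ) : R)) * q = q * a := hrel a ha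
    have h2 : (q : R) * (s : R) = 1 := congrArg Subtype.val hqs
    have h3 : ((t : R) * a * ((t⁻¹ : Rˣ) : R)) * (q * (s : R)) = q * a * (s : R) := by
      rw [← mul_assoc, h1]
    rw [← h3, h2, mul_one]

lemma no_intertwiner (hs : IsSimpleRing ↥(𝒜 0))
    (houter : ∀ g : G, g ≠ 0 → ∀ u : Rˣ, (u : R) ∈ 𝒜 g →
      ¬ ∃ v w : R, v ∈ 𝒜 0 ∧ w ∈ 𝒜 0 ∧ v * w = 1 ∧ w * v = 1 ∧
          ∀ a ∈ 𝒜 0, (u : R) * a * ((u⁻¹ : Rˣ) : R) = v * a * w)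
    (hcp : ∀ g : G, ∃ u : Rˣ, (u : R) ∈ 𝒜 g)
    {s t : G} (hst : s ≠ t) (u : Rˣ) (hu : (u : R) ∈ 𝒜 s)
    {z : R} (hz : z ∈ 𝒜 t) (hz0 : z ≠ 0)
    (hrel : ∀ a ∈ 𝒜 0, ((u : R) * a * ((u⁻¹ : Rˣ) : R)) * z = z * a) : False := by
  obtain ⟨ut, hut⟩ := hcp t
  set T : Rˣ := ut⁻¹ * u with hT
  have hTmem : (T : R) ∈ 𝒜 (-t + s) := SetLike.mul_mem_graded (inv_mem_neg 𝒜 ut hut) hu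
  have hTne : -t + s ≠ 0 := by
    intro hc
    exact hst (neg_add_eq_zero.mp hc).symm
  set q : R := ((ut⁻¹ : Rˣ) : R) * z with hqdef
  have hqmem : q ∈ 𝒜 0 := by
    have := SetLike.mul_mem_graded (inv_mem_neg 𝒜 ut hut) hz
    rwa [neg_add_cancel] at this
  have hq0 : q ≠ 0 := by
    intro hc
    apply hz0
    have hz' : ((ut : R)) * q = z := by rw [hqdef, ← mul_assoc, ut.mul_inv, one_mul]
    rw [← hz', hc, mul_zero]
  have hTinv : ((T⁻¹ : Rˣ) : R) = ((u⁻¹ : Rˣ) : R) * (ut : R) := by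
    rw [hT, mul_inv_rev, inv_inv, Units.val_mul]
  have hrel' : ∀ b ∈ 𝒜 0, ((T : R) * b * ((T⁻¹ : Rˣ) : R)) * q = q * b := by
    intro b hb
    have hTval : (T : R) = ((ut⁻¹ : Rˣ) : R) * (u : R) := by rw [hT, Units.val_mul]
    have hTb : (T : R) * b * ((T⁻¹ : Rˣ) : R)
        = ((ut⁻¹ : Rˣ) : R) * (((u : R) * b * ((u⁻¹ : Rˣ) : R)) * (ut : R)) := by
      rw [hTinv, hTval]; noncomm_ring
    rw [hTb, hqdef]
    calc (((ut⁻¹ : Rˣ) : R) * (((u : R) * b * ((u⁻¹ : Rˣ) : R)) * (ut : R))) * (((ut⁻¹ : Rˣ) : R) * z)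
        = ((ut⁻¹ : Rˣ) : R) * (((u : R) * b * ((u⁻¹ : Rˣ) : R)) * ((ut : R) * (((ut⁻¹ : Rˣ) : R) * z))) := by
          noncomm_ring
      _ = ((ut⁻¹ : Rˣ) : R) * (((u : R) * b * ((u⁻¹ : Rˣ) : R)) * z) := by
          rw [ut.mul_inv_cancel_left]
      _ = ((ut⁻¹ : Rˣ) : R) * (z * b) := by rw [hrel b hb]
      _ = ((ut⁻¹ : Rˣ) : R) * z * b := by rw [mul_assoc]
  obtain ⟨v, w, hv, hw, hvw, hwv, hconj⟩ := exists_inner 𝒜 hs T hTmem hqmem hq0 hrel'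
  exact houter (-t + s) hTne T hTmem ⟨v, w, hv, hw, hvw, hwv, hconj⟩

lemma grade_le_of_mem (hs : IsSimpleRing ↥(𝒜 0)) (hcp : ∀ g : G, ∃ u : Rˣ, (u : R) ∈ 𝒜 g)
    {P : AddSubgroup R} (hP : Controlled.IsSubBimodule 𝒜 P) {g : G}
    {x : R} (hxP : x ∈ P) (hxg : x ∈ 𝒜 g) (hx0 : x ≠ 0) : 𝒜 g ≤ P := by
  obtain ⟨u, hu⟩ := hcp g
  have hinv := inv_mem_neg 𝒜 u hu
  let I : TwoSidedIdeal ↥(𝒜 0) := TwoSidedIdeal.mk' {c : ↥(𝒜 0) | (c : R) * (u : R) ∈ P}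
    (by show ((0 : ↥(𝒜 0)) : R) * (u : R) ∈ P; rw [ZeroMemClass.coe_zero, zero_mul]; exact P.zero_mem)
    (fun {c d} hc hd => by
      show ((c + d : ↥(𝒜 0)) : R) * (u : R) ∈ P
      rw [AddSubgroup.coe_add, add_mul]; exact P.add_mem hc hd)
    (fun {c} hc => by
      show ((-c : ↥(𝒜 0)) : R) * (u : R) ∈ P
      rw [AddSubgroup.coe_neg, neg_mul]; exact P.neg_mem hc)
    (fun {d c} hc => by
      show ((d : R) * (c : R)) * (u : R) ∈ P
      rw [mul_assoc]
      exact (hP (d : R) d.2 _ hc).1)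
    (fun {c d} hc => by
      show ((c : R) * (d : R)) * (u : R) ∈ P
      have hmem : ((u⁻¹ : Rˣ) : R) * ((d : R) * (u : R)) ∈ 𝒜 0 := by
        have := SetLike.mul_mem_graded hinv (SetLike.mul_mem_graded d.2 hu)
        rwa [zero_add, neg_add_cancel] at this
      have he : (c : R) * (d : R) * (u : R)
          = ((c : R) * (u : R)) * (((u⁻¹ : Rˣ) : R) * ((d : R) * (u : R))) := by
        rw [mul_assoc (c : R) (u : R), u.mul_inv_cancel_left, ← mul_assoc]
      rw [he]
      exact (hP _ hmem _ hc).2)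
  have hITop : I = ⊤ := by
    rcases hs.simple.eq_bot_or_eq_top I with hbot | htop
    · exfalso
      have hc0mem : x * ((u⁻¹ : Rˣ) : R) ∈ 𝒜 0 := by
        have := SetLike.mul_mem_graded hxg hinv
        rwa [add_neg_cancel] at this
      have hc0 : (⟨x * ((u⁻¹ : Rˣ) : R), hc0mem⟩ : ↥(𝒜 0)) ∈ I := by
        refine (TwoSidedIdeal.mem_mk' _ _ _ _ _ _ _).mpr ?_
        show x * ((u⁻¹ : Rˣ) : R) * (u : R) ∈ P
        rwa [u.inv_mul_cancel_right]
      rw [hbot, TwoSidedIdeal.mem_bot] at hc0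
      apply hx0
      have := congrArg Subtype.val hc0
      simp only [ZeroMemClass.coe_zero] at this
      rw [← u.inv_mul_cancel_right x, this, zero_mul]
    · exact htop
  intro y hy
  have hymem : y * ((u⁻¹ : Rˣ) : R) ∈ 𝒜 0 := by
    have := SetLike.mul_mem_graded hy hinv
    rwa [add_neg_cancel] at this
  have : (⟨y * ((u⁻¹ : Rˣ) : R), hymem⟩ : ↥(𝒜 0)) ∈ I := hITop ▸ trivial
  have hyP : y * ((u⁻¹ : Rˣ) : R) * (u : R) ∈ P :=
    (TwoSidedIdeal.mem_mk' _ _ _ _ _ _ (⟨y * ((u⁻¹ : Rˣ) : R), hymem⟩ : ↥(𝒜 0))).mp this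
  rwa [u.inv_mul_cancel_right] at hyP

lemma sum_rep {x : R} {T : Finset G} (hvan : ∀ g ∉ T, (decompose 𝒜 x g : R) = 0) :
    x = ∑ g ∈ T, (decompose 𝒜 x g : R) := by
  classical
  conv_lhs => rw [← DirectSum.sum_support_decompose 𝒜 x]
  refine Finset.sum_subset ?_ ?_
  · intro g hg
    by_contra hgT
    exact (DFinsupp.mem_support_iff.mp hg) (Subtype.ext (hvan g hgT))
  · intro g _ hgs
    have h0 : decompose 𝒜 x g = 0 := DFinsupp.notMem_support_iff.mp hgs
    rw [h0]
    rfl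

lemma exists_RH (hs : IsSimpleRing ↥(𝒜 0))
    (houter : ∀ g : G, g ≠ 0 → ∀ u : Rˣ, (u : R) ∈ 𝒜 g →
      ¬ ∃ v w : R, v ∈ 𝒜 0 ∧ w ∈ 𝒜 0 ∧ v * w = 1 ∧ w * v = 1 ∧
          ∀ a ∈ 𝒜 0, (u : R) * a * ((u⁻¹ : Rˣ) : R) = v * a * w)
    (hcp : ∀ g : G, ∃ u : Rˣ, (u : R) ∈ 𝒜 g)
    {P : AddSubgroup R} (hP : Controlled.IsSubBimodule 𝒜 P) :
    ∃ H : Set G, Controlled.RH 𝒜 H = P := by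
  classical
  set H : Set G := {g | ∃ x, x ∈ P ∧ x ∈ 𝒜 g ∧ x ≠ 0} with hHdef
  have hQP : Controlled.RH 𝒜 H ≤ P := RH_le 𝒜 (fun g hg => by
    obtain ⟨x, hxP, hxg, hx0⟩ := hg
    exact grade_le_of_mem 𝒜 hs hcp hP hxP hxg hx0)
  have h1 : (1 : R) ≠ 0 := one_ne_zero_of_simple 𝒜 hs
  have main : ∀ n : ℕ, ∀ x ∈ P, ∀ T : Finset G, T.card ≤ n →
      (∀ g ∉ T, (decompose 𝒜 x g : R) = 0) → x ∈ Controlled.RH 𝒜 H := by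
    intro n
    induction n using Nat.strong_induction_on with
    | _ n IH =>
    intro x hxP T hcard hvan
    by_cases hzero : ∃ g ∈ T, (decompose 𝒜 x g : R) = 0
    · obtain ⟨g, hgT, hg0⟩ := hzero
      have hTpos : 1 ≤ T.card := Finset.card_pos.mpr ⟨g, hgT⟩
      refine IH (T.card - 1) (by omega) x hxP (T.erase g)
        (by rw [Finset.card_erase_of_mem hgT]) ?_
      intro k hk
      by_cases hkg : k = g
      · subst hkg; exact hg0
      · exact hvan k (fun hkT => hk (Finset.mem_erase.mpr ⟨hkg, hkT⟩))
    · push_neg at hzero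
      by_cases hTH : ∃ g2 ∈ T, g2 ∈ H
      · obtain ⟨g2, hg2T, hg2H⟩ := hTH
        have hTpos : 1 ≤ T.card := Finset.card_pos.mpr ⟨g2, hg2T⟩
        have hx2Q : (decompose 𝒜 x g2 : R) ∈ Controlled.RH 𝒜 H :=
          grade_le_RH 𝒜 hg2H ((decompose 𝒜 x) g2).2
        have hx2P : (decompose 𝒜 x g2 : R) ∈ P := hQP hx2Q
        have hrest : x - (decompose 𝒜 x g2 : R) ∈ Controlled.RH 𝒜 H := by
          refine IH (T.card - 1) (by omega) _ (P.sub_mem hxP hx2P) (T.erase g2)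
            (by rw [Finset.card_erase_of_mem hg2T]) ?_
          intro k hk
          rw [DirectSum.decompose_sub, DirectSum.sub_apply, AddSubgroup.coe_sub]
          by_cases hkg : k = g2
          · subst hkg
            rw [DirectSum.decompose_of_mem_same 𝒜 ((decompose 𝒜 x) k).2, sub_self]
          · have hkT : k ∉ T := fun hkT => hk (Finset.mem_erase.mpr ⟨hkg, hkT⟩)
            rw [hvan k hkT,
              DirectSum.decompose_of_mem_ne 𝒜 ((decompose 𝒜 x) g2).2 (Ne.symm hkg),
              sub_self]
        have := (Controlled.RH 𝒜 H).add_mem hrest hx2Q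
        rwa [sub_add_cancel] at this
      · push_neg at hTH
        rcases Nat.lt_or_ge T.card 2 with hsmall | hbig
        · -- card 0 or 1
          interval_cases h : T.card
          · have hT : T = ∅ := Finset.card_eq_zero.mp h
            have hx0 : x = 0 := by
              have hr := sum_rep 𝒜 hvan
              rw [hT, Finset.sum_empty] at hr
              exact hr
            rw [hx0]; exact (Controlled.RH 𝒜 H).zero_mem
          · obtain ⟨g, hTg⟩ := Finset.card_eq_one.mp h
            have hrep : x = (decompose 𝒜 x g : R) := by
              have hr := sum_rep 𝒜 hvan
              rw [hTg, Finset.sum_singleton] at hr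
              exact hr
            have hgH : g ∈ H := by
              refine ⟨x, hxP, hrep ▸ ((decompose 𝒜 x) g).2, ?_⟩
              rw [hrep]
              exact hzero g (hTg ▸ Finset.mem_singleton_self g)
            exact absurd hgH (hTH g (hTg ▸ Finset.mem_singleton_self g))
        · -- main case: |T| ≥ 2, T ∩ H = ∅
          exfalso
          obtain ⟨g1, hg1T, g2, hg2T, hg12⟩ := Finset.one_lt_card.mp hbig
          obtain ⟨u1, hu1⟩ := hcp g1
          have hinv1 := inv_mem_neg 𝒜 u1 hu1
          have hx1 : (decompose 𝒜 x g1 : R) ≠ 0 := hzero g1 hg1T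
          let J : TwoSidedIdeal ↥(𝒜 0) := TwoSidedIdeal.mk'
            {c : ↥(𝒜 0) | ∃ y, y ∈ P ∧ (∀ g ∉ T, (decompose 𝒜 y g : R) = 0) ∧
              (decompose 𝒜 y g1 : R) = (c : R) * (u1 : R)}
            ⟨0, P.zero_mem, by simp, by simp⟩
            (fun {c d} hc hd => by
              obtain ⟨y, hyP, hyv, hy1⟩ := hc
              obtain ⟨y', hyP', hyv', hy1'⟩ := hd
              exact ⟨y + y', P.add_mem hyP hyP',
                fun g hg => by
                  rw [DirectSum.decompose_add, DirectSum.add_apply, AddSubgroup.coe_add,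
                    hyv g hg, hyv' g hg, add_zero],
                by
                  rw [DirectSum.decompose_add, DirectSum.add_apply, AddSubgroup.coe_add,
                    hy1, hy1', AddSubgroup.coe_add, add_mul]⟩)
            (fun {c} hc => by
              obtain ⟨y, hyP, hyv, hy1⟩ := hc
              exact ⟨-y, P.neg_mem hyP,
                fun g hg => by
                  rw [DirectSum.decompose_neg, DFinsupp.neg_apply, AddSubgroup.coe_neg,
                    hyv g hg, neg_zero],
                by
                  rw [DirectSum.decompose_neg, DFinsupp.neg_apply, AddSubgroup.coe_neg,
                    hy1, AddSubgroup.coe_neg, neg_mul]⟩)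
            (fun {d c} hc => by
              obtain ⟨y, hyP, hyv, hy1⟩ := hc
              exact ⟨(d : R) * y, (hP _ d.2 _ hyP).1,
                fun g hg => by rw [decompose_zero_mul 𝒜 d.2, hyv g hg, mul_zero],
                by rw [decompose_zero_mul 𝒜 d.2, hy1, ← mul_assoc]; rfl⟩)
            (fun {c d} hc => by
              obtain ⟨y, hyP, hyv, hy1⟩ := hc
              have hmem : ((u1⁻¹ : Rˣ) : R) * ((d : R) * (u1 : R)) ∈ 𝒜 0 := by
                have := SetLike.mul_mem_graded hinv1 (SetLike.mul_mem_graded d.2 hu1)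
                rwa [zero_add, neg_add_cancel] at this
              exact ⟨y * (((u1⁻¹ : Rˣ) : R) * ((d : R) * (u1 : R))), (hP _ hmem _ hyP).2,
                fun g hg => by rw [decompose_mul_zero 𝒜 hmem, hyv g hg, zero_mul],
                by
                  rw [decompose_mul_zero 𝒜 hmem, hy1, mul_assoc, u1.mul_inv_cancel_left,
                    ← mul_assoc]
                  rfl⟩)
          have hJTop : J = ⊤ := by
            rcases hs.simple.eq_bot_or_eq_top J with hbot | htop
            · exfalso
              have hc0mem : (decompose 𝒜 x g1 : R) * ((u1⁻¹ : Rˣ) : R) ∈ 𝒜 0 := by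
                have := SetLike.mul_mem_graded ((decompose 𝒜 x) g1).2 hinv1
                rwa [add_neg_cancel] at this
              have hc0 : (⟨_, hc0mem⟩ : ↥(𝒜 0)) ∈ J :=
                (TwoSidedIdeal.mem_mk' _ _ _ _ _ _ _).mpr
                  ⟨x, hxP, hvan, by rw [u1.inv_mul_cancel_right]⟩
              rw [hbot, TwoSidedIdeal.mem_bot] at hc0
              have := congrArg Subtype.val hc0
              simp only [ZeroMemClass.coe_zero] at this
              apply hx1
              rw [← u1.inv_mul_cancel_right (decompose 𝒜 x g1 : R), this, zero_mul]
            · exact htop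
          have h1J : (1 : ↥(𝒜 0)) ∈ J := hJTop ▸ trivial
          have h1J' := (TwoSidedIdeal.mem_mk' _ _ _ _ _ _ (1 : ↥(𝒜 0))).mp h1J
          simp only [Set.mem_setOf_eq] at h1J'
          obtain ⟨y, hyP, hyv, hy1⟩ := h1J'
          rw [show ((1 : ↥(𝒜 0)) : R) = (1 : R) from rfl, one_mul] at hy1
          -- all components of y on T are nonzero (else y ∈ RH H, contradicting g1 ∉ H)
          have hyall : ∀ g ∈ T, (decompose 𝒜 y g : R) ≠ 0 := by
            intro g hgT h0
            have hyQ : y ∈ Controlled.RH 𝒜 H := by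
              refine IH (T.card - 1) (by omega) y hyP (T.erase g)
                (by rw [Finset.card_erase_of_mem hgT]) ?_
              intro k hk
              by_cases hkg : k = g
              · subst hkg; exact h0
              · exact hyv k (fun hkT => hk (Finset.mem_erase.mpr ⟨hkg, hkT⟩))
            have := (mem_RH_iff 𝒜).mp hyQ g1 (hTH g1 hg1T)
            rw [hy1] at this
            exact unit_ne_zero h1 u1 this
          -- the intertwining relation for the g2-component of y
          have hkey : ∀ b ∈ 𝒜 0, b * (decompose 𝒜 y g2 : R)
              = (decompose 𝒜 y g2 : R) * (((u1⁻¹ : Rˣ) : R) * (b * (u1 : R))) := by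
            intro b hb
            have hσ : ((u1⁻¹ : Rˣ) : R) * (b * (u1 : R)) ∈ 𝒜 0 := by
              have := SetLike.mul_mem_graded hinv1 (SetLike.mul_mem_graded hb hu1)
              rwa [zero_add, neg_add_cancel] at this
            set z := b * y - y * (((u1⁻¹ : Rˣ) : R) * (b * (u1 : R))) with hzdef
            have hzP : z ∈ P := P.sub_mem (hP b hb y hyP).1 (hP _ hσ y hyP).2
            have hzcomp : ∀ g, (decompose 𝒜 z g : R)
                = b * (decompose 𝒜 y g : R)
                  - (decompose 𝒜 y g : R) * (((u1⁻¹ : Rˣ) : R) * (b * (u1 : R))) := by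
              intro g
              rw [hzdef, DirectSum.decompose_sub, DirectSum.sub_apply, AddSubgroup.coe_sub,
                decompose_zero_mul 𝒜 hb, decompose_mul_zero 𝒜 hσ]
            have hzg1 : (decompose 𝒜 z g1 : R) = 0 := by
              rw [hzcomp, hy1, u1.mul_inv_cancel_left, sub_self]
            have hzQ : z ∈ Controlled.RH 𝒜 H := by
              refine IH (T.card - 1) (by omega) z hzP (T.erase g1)
                (by rw [Finset.card_erase_of_mem hg1T]) ?_
              intro k hk
              by_cases hkg : k = g1
              · subst hkg; exact hzg1
              · have hkT : k ∉ T := fun hkT => hk (Finset.mem_erase.mpr ⟨hkg, hkT⟩)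
                rw [hzcomp, hyv k hkT, mul_zero, zero_mul, sub_self]
            have h0 : (decompose 𝒜 z g2 : R) = 0 :=
              (mem_RH_iff 𝒜).mp hzQ g2 (hTH g2 hg2T)
            rw [hzcomp] at h0
            exact sub_eq_zero.mp h0
          have hrel : ∀ a ∈ 𝒜 0, ((u1 : R) * a * ((u1⁻¹ : Rˣ) : R)) * (decompose 𝒜 y g2 : R)
              = (decompose 𝒜 y g2 : R) * a := by
            intro a ha
            have := hkey ((u1 : R) * a * ((u1⁻¹ : Rˣ) : R)) (conj_mem_zero 𝒜 u1 hu1 ha)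
            rwa [u1.inv_mul_cancel_right, u1.inv_mul_cancel_left] at this
          exact no_intertwiner 𝒜 hs houter hcp hg12 u1 hu1 ((decompose 𝒜 y) g2).2
            (hyall g2 hg2T) hrel
  refine ⟨H, le_antisymm hQP ?_⟩
  intro x hx
  classical
  have hvanx : ∀ g ∉ DFinsupp.support (decompose 𝒜 x), (decompose 𝒜 x g : R) = 0 := by
    intro g hg
    have h0 : decompose 𝒜 x g = 0 := DFinsupp.notMem_support_iff.mp hg
    rw [h0]
    rfl
  exact main (DFinsupp.support (decompose 𝒜 x)).card x hx _ le_rfl hvanx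

open Controlled in
/-- Inverse of a bimodule isomorphism. -/
noncomputable def BimodIso.symm' {P Q : AddSubgroup R} (hP : IsSubBimodule 𝒜 P)
    (φ : BimodIso 𝒜 P Q) : BimodIso 𝒜 Q P where
  toEquiv := φ.toEquiv.symm
  map_left := by
    intro a x ha hx hax
    set p := φ.toEquiv.symm ⟨x, hx⟩ with hp
    have hap : a * (p : R) ∈ P := (hP a ha _ p.2).1
    have h1 : (φ.toEquiv ⟨a * (p : R), hap⟩ : R) = a * (φ.toEquiv ⟨(p : R), p.2⟩ : R) :=
      φ.map_left a (p : R) ha p.2 hap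
    have h2 : φ.toEquiv ⟨(p : R), p.2⟩ = ⟨x, hx⟩ := by
      rw [hp]
      exact φ.toEquiv.apply_symm_apply ⟨x, hx⟩
    rw [h2] at h1
    have h3 : φ.toEquiv ⟨a * (p : R), hap⟩ = ⟨a * x, hax⟩ := Subtype.ext h1
    have h4 : (⟨a * (p : R), hap⟩ : P) = φ.toEquiv.symm ⟨a * x, hax⟩ := by
      rw [← h3, φ.toEquiv.symm_apply_apply]
    rw [← h4]
  map_right := by
    intro a x ha hx hxa
    set p := φ.toEquiv.symm ⟨x, hx⟩ with hp
    have hpa : (p : R) * a ∈ P := (hP a ha _ p.2).2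
    have h1 : (φ.toEquiv ⟨(p : R) * a, hpa⟩ : R) = (φ.toEquiv ⟨(p : R), p.2⟩ : R) * a :=
      φ.map_right a (p : R) ha p.2 hpa
    have h2 : φ.toEquiv ⟨(p : R), p.2⟩ = ⟨x, hx⟩ := by
      rw [hp]
      exact φ.toEquiv.apply_symm_apply ⟨x, hx⟩
    rw [h2] at h1
    have h3 : φ.toEquiv ⟨(p : R) * a, hpa⟩ = ⟨x * a, hxa⟩ := Subtype.ext h1
    have h4 : (⟨(p : R) * a, hpa⟩ : P) = φ.toEquiv.symm ⟨x * a, hxa⟩ := by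
      rw [← h3, φ.toEquiv.symm_apply_apply]
    rw [← h4]

lemma subset_of_iso (hs : IsSimpleRing ↥(𝒜 0))
    (houter : ∀ g : G, g ≠ 0 → ∀ u : Rˣ, (u : R) ∈ 𝒜 g →
      ¬ ∃ v w : R, v ∈ 𝒜 0 ∧ w ∈ 𝒜 0 ∧ v * w = 1 ∧ w * v = 1 ∧
          ∀ a ∈ 𝒜 0, (u : R) * a * ((u⁻¹ : Rˣ) : R) = v * a * w)
    (hcp : ∀ g : G, ∃ u : Rˣ, (u : R) ∈ 𝒜 g)
    {S T : Set G} (φ : Controlled.BimodIso 𝒜 (Controlled.RH 𝒜 S) (Controlled.RH 𝒜 T)) :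
    S ⊆ T := by
  intro s hs'
  by_contra hsT
  have h1 : (1 : R) ≠ 0 := one_ne_zero_of_simple 𝒜 hs
  obtain ⟨u, hu⟩ := hcp s
  have huS : (u : R) ∈ Controlled.RH 𝒜 S := grade_le_RH 𝒜 hs' hu
  set y : R := (φ.toEquiv ⟨(u : R), huS⟩ : R) with hy
  have hyT : y ∈ Controlled.RH 𝒜 T := (φ.toEquiv ⟨(u : R), huS⟩).2
  have hy0 : y ≠ 0 := by
    intro hc
    have : φ.toEquiv ⟨(u : R), huS⟩ = 0 := Subtype.ext hc
    have h2 : (⟨(u : R), huS⟩ : Controlled.RH 𝒜 S) = 0 := by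
      apply φ.toEquiv.injective
      rw [this, map_zero]
    exact unit_ne_zero h1 u (congrArg Subtype.val h2)
  -- the intertwining relation
  have hrel0 : ∀ a ∈ 𝒜 0, ((u : R) * a * ((u⁻¹ : Rˣ) : R)) * y = y * a := by
    intro a ha
    have hua : (u : R) * a ∈ Controlled.RH 𝒜 S := (isSubBimodule_RH 𝒜 S a ha _ huS).2
    have hr : (φ.toEquiv ⟨(u : R) * a, hua⟩ : R) = y * a :=
      φ.map_right a (u : R) ha huS hua
    have hc : (u : R) * a = ((u : R) * a * ((u⁻¹ : Rˣ) : R)) * (u : R) := by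
      rw [u.inv_mul_cancel_right]
    have hca : ((u : R) * a * ((u⁻¹ : Rˣ) : R)) * (u : R) ∈ Controlled.RH 𝒜 S := hc ▸ hua
    have hl : (φ.toEquiv ⟨((u : R) * a * ((u⁻¹ : Rˣ) : R)) * (u : R), hca⟩ : R)
        = ((u : R) * a * ((u⁻¹ : Rˣ) : R)) * y :=
      φ.map_left ((u : R) * a * ((u⁻¹ : Rˣ) : R)) (u : R) (conj_mem_zero 𝒜 u hu ha) huS hca
    have : (⟨(u : R) * a, hua⟩ : Controlled.RH 𝒜 S) = ⟨_, hca⟩ := Subtype.ext hc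
    rw [this, hl] at hr
    exact hr
  -- pick a nonzero component of y
  have hexists : ∃ t : G, (decompose 𝒜 y t : R) ≠ 0 := by
    by_contra hc
    push_neg at hc
    apply hy0
    classical
    rw [← DirectSum.sum_support_decompose 𝒜 y]
    exact Finset.sum_eq_zero (fun t _ => hc t)
  obtain ⟨t, ht0⟩ := hexists
  have htT : t ∈ T := by
    by_contra htT
    exact ht0 ((mem_RH_iff 𝒜).mp hyT t htT)
  have hst : s ≠ t := fun hc => hsT (hc ▸ htT)
  have hrel : ∀ a ∈ 𝒜 0, ((u : R) * a * ((u⁻¹ : Rˣ) : R)) * (decompose 𝒜 y t : R)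
      = (decompose 𝒜 y t : R) * a := by
    intro a ha
    have := congrArg (fun r => (decompose 𝒜 r t : R)) (hrel0 a ha)
    simpa only [decompose_zero_mul 𝒜 (conj_mem_zero 𝒜 u hu ha), decompose_mul_zero 𝒜 ha]
      using this
  exact no_intertwiner 𝒜 hs houter hcp hst u hu ((decompose 𝒜 y) t).2 ht0 hrel

lemma nontrivial_of_controlled (hC : Controlled.IsControlled 𝒜) : (1 : R) ≠ 0 := by
  intro h
  have hsub : ∀ x : R, x = 0 := fun x => by
    calc x = x * 1 := (mul_one x).symm
      _ = 0 := by rw [h, mul_zero]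
  have heq : Controlled.RH 𝒜 ∅ = Controlled.RH 𝒜 Set.univ := by
    ext x
    rw [hsub x]
    exact iff_of_true (zero_mem _) (zero_mem _)
  have := hC.2.1 heq
  exact (this ▸ Set.mem_univ (0 : G) : (0 : G) ∈ (∅ : Set G))

lemma simple_of_controlled (hC : Controlled.IsControlled 𝒜)
    (hcp : ∀ g : G, ∃ u : Rˣ, (u : R) ∈ 𝒜 g) : IsSimpleRing ↥(𝒜 0) := by
  obtain ⟨hbi, hinj, hsurj, hiso⟩ := hC
  have h1 : (1 : R) ≠ 0 := nontrivial_of_controlled 𝒜 ⟨hbi, hinj, hsurj, hiso⟩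
  have h1A : (1 : ↥(𝒜 0)) ≠ 0 := fun hc => h1 (congrArg Subtype.val hc)
  haveI : Nontrivial (TwoSidedIdeal ↥(𝒜 0)) := by
    refine nontrivial_of_ne ⊥ ⊤ (fun hc => h1A ?_)
    have : (1 : ↥(𝒜 0)) ∈ (⊥ : TwoSidedIdeal ↥(𝒜 0)) := hc ▸ trivial
    exact (TwoSidedIdeal.mem_bot _).mp this
  constructor
  constructor
  intro I
  by_cases hIbot : I = ⊥
  · exact Or.inl hIbot
  right
  -- the corresponding sub-bimodule of R
  let PI : AddSubgroup R :=
    { carrier := {x : R | ∃ hx : x ∈ 𝒜 0, (⟨x, hx⟩ : ↥(𝒜 0)) ∈ I}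
      zero_mem' := ⟨(𝒜 0).zero_mem, I.zero_mem⟩
      add_mem' := by
        rintro a b ⟨ha, hIa⟩ ⟨hb, hIb⟩
        exact ⟨(𝒜 0).add_mem ha hb, I.add_mem hIa hIb⟩
      neg_mem' := by
        rintro a ⟨ha, hIa⟩
        exact ⟨(𝒜 0).neg_mem ha, I.neg_mem hIa⟩ }
  have hPIbi : Controlled.IsSubBimodule 𝒜 PI := by
    rintro a ha x ⟨hx, hIx⟩
    constructor
    · have hax : a * x ∈ 𝒜 0 := by
        have := SetLike.mul_mem_graded ha hx; rwa [zero_add] at this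
      exact ⟨hax, I.mul_mem_left ⟨a, ha⟩ ⟨x, hx⟩ hIx⟩
    · have hxa : x * a ∈ 𝒜 0 := by
        have := SetLike.mul_mem_graded hx ha; rwa [zero_add] at this
      exact ⟨hxa, I.mul_mem_right ⟨x, hx⟩ ⟨a, ha⟩ hIx⟩
  obtain ⟨H', hH'⟩ := hsurj PI hPIbi
  obtain ⟨c, hcI, hc0⟩ : ∃ c : ↥(𝒜 0), c ∈ I ∧ c ≠ 0 := by
    by_contra hc
    push_neg at hc
    apply hIbot
    refine SetLike.ext (fun d => ⟨fun hd => ?_, fun hd => ?_⟩)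
    · rw [TwoSidedIdeal.mem_bot]; exact hc d hd
    · rw [TwoSidedIdeal.mem_bot] at hd; rw [hd]; exact I.zero_mem
  have hcPI : (c : R) ∈ PI := ⟨c.2, by rwa [show (⟨(c : R), c.2⟩ : ↥(𝒜 0)) = c from Subtype.ext rfl]⟩
  have hH0 : H' = {0} := by
    have hsub : H' ⊆ {0} := by
      intro h hh
      by_contra hne
      rw [Set.mem_singleton_iff] at hne
      obtain ⟨u, hu⟩ := hcp h
      have huPI : (u : R) ∈ PI := hH' ▸ grade_le_RH 𝒜 hh hu
      obtain ⟨hu0, _⟩ := huPI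
      have e1 : (decompose 𝒜 ((u : R)) 0 : R) = (u : R) := DirectSum.decompose_of_mem_same 𝒜 hu0
      have e2 : (decompose 𝒜 ((u : R)) 0 : R) = 0 := DirectSum.decompose_of_mem_ne 𝒜 hu hne
      exact unit_ne_zero h1 u (e1 ▸ e2)
    have hne : H'.Nonempty := by
      rcases Set.eq_empty_or_nonempty H' with rfl | hne
      · exfalso
        rw [RH_empty 𝒜] at hH'
        have : (c : R) ∈ (⊥ : AddSubgroup R) := hH' ▸ hcPI
        rw [AddSubgroup.mem_bot] at this
        exact hc0 (Subtype.ext this)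
      · exact hne
    obtain ⟨h0, hh0⟩ := hne
    have : h0 = 0 := hsub hh0
    subst this
    exact Set.eq_singleton_iff_nonempty_unique_mem.mpr ⟨⟨0, hh0⟩, fun k hk => hsub hk⟩
  rw [hH0, RH_singleton 𝒜 0] at hH'
  refine SetLike.ext (fun d => ⟨fun _ => trivial, fun _ => ?_⟩)
  have hdPI : (d : R) ∈ PI := hH' ▸ d.2
  obtain ⟨hx, hIx⟩ := hdPI
  rwa [show (⟨(d : R), hx⟩ : ↥(𝒜 0)) = d from Subtype.ext rfl] at hIx

lemma outer_of_controlled (hC : Controlled.IsControlled 𝒜) {g : G} (hg : g ≠ 0)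
    (u : Rˣ) (hu : (u : R) ∈ 𝒜 g) (v w : R) (hv : v ∈ 𝒜 0) (hw : w ∈ 𝒜 0)
    (hvw : v * w = 1) (hwv : w * v = 1)
    (hconj : ∀ a ∈ 𝒜 0, (u : R) * a * ((u⁻¹ : Rˣ) : R) = v * a * w) : False := by
  obtain ⟨hbi, hinj, hsurj, hiso⟩ := hC
  set W : Rˣ := ⟨w, v, hwv, hvw⟩ with hWdef
  set T : Rˣ := W * u with hTdef
  have hTval : (T : R) = w * (u : R) := rfl
  have hT : (T : R) ∈ 𝒜 g := by
    rw [hTval]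
    have := SetLike.mul_mem_graded hw hu
    rwa [zero_add] at this
  have hcomm : ∀ a ∈ 𝒜 0, (T : R) * a = a * (T : R) := by
    intro a ha
    rw [hTval]
    calc w * ↑u * a = w * (↑u * a) := by rw [mul_assoc]
      _ = w * ((↑u * a * ((u⁻¹ : Rˣ) : R)) * ↑u) := by rw [u.inv_mul_cancel_right]
      _ = w * ((v * a * w) * ↑u) := by rw [hconj a ha]
      _ = (w * v) * (a * (w * ↑u)) := by noncomm_ring
      _ = a * (w * ↑u) := by rw [hwv, one_mul]
  have e0 : Controlled.RH 𝒜 ({0} : Set G) = 𝒜 0 := RH_singleton 𝒜 0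
  have eg : Controlled.RH 𝒜 ({g} : Set G) = 𝒜 g := RH_singleton 𝒜 g
  have hTinvmem : ((T⁻¹ : Rˣ) : R) ∈ 𝒜 (-g) := inv_mem_neg 𝒜 T hT
  let φeq : ↥(Controlled.RH 𝒜 ({0} : Set G)) ≃+ ↥(Controlled.RH 𝒜 ({g} : Set G)) :=
    { toFun := fun x => ⟨(x : R) * (T : R), by
        rw [eg]
        have hx0 : (x : R) ∈ 𝒜 0 := e0 ▸ x.2
        have := SetLike.mul_mem_graded hx0 hT
        rwa [zero_add] at this⟩
      invFun := fun y => ⟨(y : R) * ((T⁻¹ : Rˣ) : R), by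
        rw [e0]
        have hyg : (y : R) ∈ 𝒜 g := eg ▸ y.2
        have := SetLike.mul_mem_graded hyg hTinvmem
        rwa [add_neg_cancel] at this⟩
      left_inv := fun x => Subtype.ext (T.mul_inv_cancel_right (x : R))
      right_inv := fun y => Subtype.ext (T.inv_mul_cancel_right (y : R))
      map_add' := fun x y => Subtype.ext (add_mul (x : R) (y : R) (T : R)) }
  have hiso' : Nonempty (Controlled.BimodIso 𝒜 (Controlled.RH 𝒜 ({0} : Set G))
      (Controlled.RH 𝒜 ({g} : Set G))) := by
    refine ⟨{ toEquiv := φeq, map_left := ?_, map_right := ?_ }⟩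
    · intro a x ha hx hax
      show (a * x) * (T : R) = a * (x * (T : R))
      rw [mul_assoc]
    · intro a x ha hx hxa
      show (x * a) * (T : R) = (x * (T : R)) * a
      rw [mul_assoc, ← hcomm a ha, ← mul_assoc]
  have hsing : ({0} : Set G) = {g} := (hiso {0} {g}).mp hiso'
  rw [Set.singleton_eq_singleton_iff] at hsing
  exact hg hsing.symm

end Aux

/-- If `R` is a `G`-crossed product (each `R_g` contains a unit of `R`),
then `R` is `G`-controlled iff `R_e` is a simple ring and for every invertible
`u ∈ R_g` with `g ≠ e`, the automorphism `a ↦ u a u⁻¹` of `R_e` is outer, i.e. there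
is no `v ∈ U(R_e)` with `u a u⁻¹ = v a v⁻¹` for all `a ∈ R_e`. -/
theorem stmt17 (𝒜 : G → AddSubgroup R) [GradedRing 𝒜]
    (hcp : ∀ g : G, ∃ u : Rˣ, (u : R) ∈ 𝒜 g) :
    Controlled.IsControlled 𝒜 ↔
      (IsSimpleRing ↥(𝒜 0) ∧
        ∀ g : G, g ≠ 0 → ∀ u : Rˣ, (u : R) ∈ 𝒜 g →
          ¬ ∃ v w : R, v ∈ 𝒜 0 ∧ w ∈ 𝒜 0 ∧ v * w = 1 ∧ w * v = 1 ∧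
              ∀ a ∈ 𝒜 0, (u : R) * a * ((u⁻¹ : Rˣ) : R) = v * a * w) := by
  constructor
  · intro hC
    refine ⟨simple_of_controlled 𝒜 hC hcp, ?_⟩
    rintro g hg u hu ⟨v, w, hv, hw, hvw, hwv, hconj⟩
    exact outer_of_controlled 𝒜 hC hg u hu v w hv hw hvw hwv hconj
  · rintro ⟨hs, houter⟩
    have h1 : (1 : R) ≠ 0 := one_ne_zero_of_simple 𝒜 hs
    refine ⟨isSubBimodule_RH 𝒜, RH_injective 𝒜 h1 hcp,
      fun P hP => exists_RH 𝒜 hs houter hcp hP, ?_⟩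
    intro S T
    constructor
    · rintro ⟨φ⟩
      have hST : S ⊆ T := subset_of_iso 𝒜 hs houter hcp φ
      have hTS : T ⊆ S :=
        subset_of_iso 𝒜 hs houter hcp (BimodIso.symm' 𝒜 (isSubBimodule_RH 𝒜 S) φ)
      exact Set.Subset.antisymm hST hTS
    · rintro rfl
      exact ⟨{ toEquiv := AddEquiv.refl _,
               map_left := fun a x ha hx hax => rfl,
               map_right := fun a x ha hx hxa => rfl }⟩
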